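/- Let q(x,ξ) be a symbol satisfying the scaling property q(x, t^{E(x)}ξ) = t q(x,ξ) and the bound |q(x,ξ)| ≤ C(1 + ‖ξ‖²), where E(x) is symmetric with eigenvalues in [λ(x), Λ(x)], λ(x) > 0. Then there exist constants C₁, C₂ > 0 such that for all x, ξ: |q(x,ξ)| ≤ C₁‖ξ‖^{1/Λ(x)} for ‖ξ‖ ≤ 1, and |q(x,ξ)| ≤ C₂‖ξ‖^{1/λ(x)} for ‖ξ‖ ≥ 1. -/

import Mathlib

open Matrix MeasureTheory
open scoped ENNReal

noncomputable def toCLM {d : ℕ} (A : Matrix (Fin d) (Fin d) ℝ) :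
    EuclideanSpace ℝ (Fin d) →L[ℝ] EuclideanSpace ℝ (Fin d) :=
  LinearMap.toContinuousLinearMap (Matrix.toEuclideanLin A)

/-- `mexp A r` is the matrix power `r^A := exp(A log r)`, acting on Euclidean space,
so that `‖mexp A r‖` is the operator norm induced by the Euclidean norm. -/
noncomputable def mexp {d : ℕ} (A : Matrix (Fin d) (Fin d) ℝ) (r : ℝ) :
    EuclideanSpace ℝ (Fin d) →L[ℝ] EuclideanSpace ℝ (Fin d) :=
  NormedSpace.exp (Real.log r • toCLM A)

-- exp applied to eigenvector
lemma exp_apply_eigen {d : ℕ} (T : EuclideanSpace ℝ (Fin d) →L[ℝ] EuclideanSpace ℝ (Fin d))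
    (v : EuclideanSpace ℝ (Fin d)) (μ : ℝ) (hv : T v = μ • v) :
    NormedSpace.exp T v = Real.exp μ • v := by
  have hpow : ∀ n : ℕ, (T ^ n) v = μ ^ n • v := by
    intro n
    induction n with
    | zero => simp
    | succ n ih =>
      rw [pow_succ, ContinuousLinearMap.mul_apply, hv, ContinuousLinearMap.map_smul, ih,
        smul_smul, ← pow_succ']
  have hsum : Summable fun n : ℕ => ((n.factorial : ℝ))⁻¹ • T ^ n :=
    NormedSpace.expSeries_summable' (𝕂 := ℝ) T
  have h1 : NormedSpace.exp T v =
      ∑' n : ℕ, (((n.factorial : ℝ))⁻¹ • T ^ n) v := by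
    rw [NormedSpace.exp_eq_tsum ℝ]
    exact (ContinuousLinearMap.apply ℝ (EuclideanSpace ℝ (Fin d)) v).map_tsum hsum
  rw [h1]
  have h2 : ∀ n : ℕ, (((n.factorial : ℝ))⁻¹ • T ^ n) v = (((n.factorial : ℝ))⁻¹ * μ ^ n) • v := by
    intro n
    rw [ContinuousLinearMap.smul_apply, hpow, smul_smul]
  simp_rw [h2]
  have hs : Summable fun n : ℕ => ((n.factorial : ℝ))⁻¹ * μ ^ n := by
    simpa [smul_eq_mul] using NormedSpace.expSeries_summable' (𝕂 := ℝ) (μ : ℝ)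
  rw [hs.tsum_smul_const]
  congr 1
  rw [Real.exp_eq_exp_ℝ, NormedSpace.exp_eq_tsum ℝ]
  simp [smul_eq_mul]

lemma toCLM_eigen {d : ℕ} (A : Matrix (Fin d) (Fin d) ℝ) (hA : A.IsHermitian) (i : Fin d) :
    toCLM A (hA.eigenvectorBasis i) = hA.eigenvalues i • hA.eigenvectorBasis i := by
  have := hA.mulVec_eigenvectorBasis i
  apply (WithLp.equiv 2 (Fin d → ℝ)).injective
  simpa [toCLM, Matrix.toEuclideanLin_apply] using this

lemma norm_exp_smul_le {d : ℕ} (A : Matrix (Fin d) (Fin d) ℝ) (hA : A.IsHermitian)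
    (c M : ℝ) (hM : ∀ i, Real.exp (c * hA.eigenvalues i) ≤ M)
    (η : EuclideanSpace ℝ (Fin d)) :
    ‖NormedSpace.exp (c • toCLM A) η‖ ≤ M * ‖η‖ := by
  rcases Nat.eq_zero_or_pos d with hd | hd
  · subst hd
    have : η = 0 := Subsingleton.elim _ _
    subst this
    simp
  have hM0 : 0 ≤ M := le_trans (Real.exp_pos _).le (hM ⟨0, hd⟩)
  set b := hA.eigenvectorBasis with hb
  set u : Fin d → ℝ := fun i => b.repr η i with hu
  have heig : ∀ i, (c • toCLM A) (b i) = (c * hA.eigenvalues i) • b i := by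
    intro i
    rw [ContinuousLinearMap.smul_apply, toCLM_eigen A hA i, smul_smul]
  set w := NormedSpace.exp (c • toCLM A) η with hw
  have hsum : w = ∑ i, (Real.exp (c * hA.eigenvalues i) * u i) • b i := by
    conv_lhs => rw [hw, ← b.sum_repr η]
    rw [map_sum]
    refine Finset.sum_congr rfl fun i _ => ?_
    rw [ContinuousLinearMap.map_smul, exp_apply_eigen _ _ _ (heig i), smul_smul, mul_comm]
  have hcoord : ∀ i, b.repr w i = Real.exp (c * hA.eigenvalues i) * u i := by
    intro i
    rw [b.repr_apply_apply, hsum]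
    exact b.orthonormal.inner_right_sum _ (Finset.mem_univ i)
  have h1 : ‖w‖ = Real.sqrt (∑ i, ‖b.repr w i‖ ^ 2) := by
    rw [← b.repr.norm_map w, EuclideanSpace.norm_eq]
  have h2 : ‖η‖ = Real.sqrt (∑ i, ‖u i‖ ^ 2) := by
    rw [← b.repr.norm_map η, EuclideanSpace.norm_eq]
  rw [h1, h2]
  rw [← Real.sqrt_sq hM0, ← Real.sqrt_mul (sq_nonneg M)]
  apply Real.sqrt_le_sqrt
  rw [Finset.mul_sum]
  apply Finset.sum_le_sum
  intro i _
  rw [hcoord i]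
  have : ‖Real.exp (c * hA.eigenvalues i) * u i‖ ≤ M * ‖u i‖ := by
    rw [norm_mul]
    apply mul_le_mul_of_nonneg_right _ (norm_nonneg _)
    rw [Real.norm_eq_abs, abs_of_pos (Real.exp_pos _)]
    exact hM i
  calc ‖Real.exp (c * hA.eigenvalues i) * u i‖ ^ 2 ≤ (M * ‖u i‖) ^ 2 := by
        apply pow_le_pow_left₀ (norm_nonneg _) this
    _ = M ^ 2 * ‖u i‖ ^ 2 := by ring

set_option synthInstance.maxHeartbeats 1000000 in
lemma mexp_comp {d : ℕ} (A : Matrix (Fin d) (Fin d) ℝ) (t : ℝ) (ht : 0 < t)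
    (ξ : EuclideanSpace ℝ (Fin d)) :
    mexp A t (mexp A t⁻¹ ξ) = ξ := by
  unfold mexp
  have hcomm : Commute (Real.log t • toCLM A) (Real.log t⁻¹ • toCLM A) := by
    show _ = _
    ext v
    simp [ContinuousLinearMap.mul_apply, ContinuousLinearMap.map_smul, smul_smul, mul_comm]
  have : NormedSpace.exp (Real.log t • toCLM A) * NormedSpace.exp (Real.log t⁻¹ • toCLM A)
      = 1 := by
    rw [← NormedSpace.exp_add_of_commute_of_mem_ball (𝕂 := ℝ) hcomm
      ((NormedSpace.expSeries_radius_eq_top ℝ (EuclideanSpace ℝ (Fin d) →L[ℝ] EuclideanSpace ℝ (Fin d))).symm ▸ edist_lt_top _ _)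
      ((NormedSpace.expSeries_radius_eq_top ℝ (EuclideanSpace ℝ (Fin d) →L[ℝ] EuclideanSpace ℝ (Fin d))).symm ▸ edist_lt_top _ _)]
    have : Real.log t • toCLM A + Real.log t⁻¹ • toCLM A = 0 := by
      rw [Real.log_inv]
      module
    rw [this, NormedSpace.exp_zero]
  calc NormedSpace.exp (Real.log t • toCLM A) (NormedSpace.exp (Real.log t⁻¹ • toCLM A) ξ)
      = (NormedSpace.exp (Real.log t • toCLM A) *
        NormedSpace.exp (Real.log t⁻¹ • toCLM A)) ξ := rfl
    _ = ξ := by rw [this]; rfl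

theorem stmt15 (d : ℕ)
    (E : EuclideanSpace ℝ (Fin d) → Matrix (Fin d) (Fin d) ℝ)
    (hsym : ∀ x, (E x).IsHermitian)
    (lam Lam : EuclideanSpace ℝ (Fin d) → ℝ)
    (hlam : ∀ x, 0 < lam x)
    (hlo : ∀ x i, lam x ≤ (hsym x).eigenvalues i)
    (hhi : ∀ x i, (hsym x).eigenvalues i ≤ Lam x)
    (q : EuclideanSpace ℝ (Fin d) → EuclideanSpace ℝ (Fin d) → ℝ)
    (hq0 : ∀ x, q x 0 = 0)
    (hscale : ∀ x ξ (t : ℝ), 0 < t → q x (mexp (E x) t ξ) = t * q x ξ)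
    (C : ℝ) (hbound : ∀ x ξ, |q x ξ| ≤ C * (1 + ‖ξ‖ ^ 2)) :
    ∃ C₁ C₂ : ℝ, 0 < C₁ ∧ 0 < C₂ ∧ ∀ x ξ : EuclideanSpace ℝ (Fin d),
      (‖ξ‖ ≤ 1 → |q x ξ| ≤ C₁ * ‖ξ‖ ^ (1 / Lam x)) ∧
      (1 ≤ ‖ξ‖ → |q x ξ| ≤ C₂ * ‖ξ‖ ^ (1 / lam x)) := by
  have hC : 0 ≤ C := by
    have := hbound 0 0
    rw [hq0] at this
    simp at this
    linarith [this]
  refine ⟨2 * C + 1, 2 * C + 1, by linarith, by linarith, fun x ξ => ?_⟩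
  -- general scaling estimate
  have key : ∀ e : ℝ, e ≠ 0 → ξ ≠ 0 →
      (∀ i, ((‖ξ‖ : ℝ) ^ (1/e))⁻¹ ^ (hsym x).eigenvalues i ≤ ‖ξ‖⁻¹) →
      |q x ξ| ≤ (2 * C + 1) * ‖ξ‖ ^ (1/e) := by
    intro e he hξ hMi
    have hr : 0 < ‖ξ‖ := norm_pos_iff.mpr hξ
    set t : ℝ := ‖ξ‖ ^ (1/e) with htdef
    have ht : 0 < t := Real.rpow_pos_of_pos hr _
    set η := mexp (E x) t⁻¹ ξ with hη
    have hqeq : q x ξ = t * q x η := by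
      have := hscale x η t ht
      rw [hη, mexp_comp (E x) t ht ξ] at this
      exact this
    have hηnorm : ‖η‖ ≤ 1 := by
      have hM : ∀ i, Real.exp (Real.log t⁻¹ * (hsym x).eigenvalues i) ≤ ‖ξ‖⁻¹ := by
        intro i
        rw [← Real.rpow_def_of_pos (inv_pos.mpr ht)]
        exact hMi i
      have := norm_exp_smul_le (E x) (hsym x) (Real.log t⁻¹) (‖ξ‖⁻¹) hM ξ
      rw [hη]
      unfold mexp
      calc ‖NormedSpace.exp (Real.log t⁻¹ • toCLM (E x)) ξ‖ ≤ ‖ξ‖⁻¹ * ‖ξ‖ := this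
        _ = 1 := inv_mul_cancel₀ (ne_of_gt hr)
    have hb := hbound x η
    have : |q x ξ| = t * |q x η| := by
      rw [hqeq, abs_mul, abs_of_pos ht]
    rw [this]
    have h2 : |q x η| ≤ 2 * C := by
      calc |q x η| ≤ C * (1 + ‖η‖ ^ 2) := hb
        _ ≤ C * (1 + 1) := by
            apply mul_le_mul_of_nonneg_left _ hC
            nlinarith [norm_nonneg η]
        _ = 2 * C := by ring
    calc t * |q x η| ≤ t * (2 * C) := mul_le_mul_of_nonneg_left h2 ht.le
      _ ≤ (2 * C + 1) * t := by nlinarith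
  constructor
  · intro hξ1
    rcases eq_or_ne ξ 0 with h0 | h0
    · rw [h0, hq0]
      simp only [abs_zero]
      positivity
    · -- ξ ≠ 0, so d > 0 and Lam x > 0
      have hd : 0 < d := by
        by_contra h
        push_neg at h
        interval_cases d
        exact h0 (Subsingleton.elim _ _)
      have i0 : Fin d := ⟨0, hd⟩
      have hLam : 0 < Lam x := lt_of_lt_of_le (hlam x) (le_trans (hlo x i0) (hhi x i0))
      have hr : 0 < ‖ξ‖ := norm_pos_iff.mpr h0
      apply key (Lam x) (ne_of_gt hLam) h0
      intro i
      set t : ℝ := ‖ξ‖ ^ (1 / Lam x) with htdef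
      have ht : 0 < t := Real.rpow_pos_of_pos hr _
      have ht1 : t ≤ 1 := Real.rpow_le_one (norm_nonneg _) hξ1 (by positivity)
      have hti : 1 ≤ t⁻¹ := (one_le_inv₀ ht).mpr ht1
      calc t⁻¹ ^ (hsym x).eigenvalues i ≤ t⁻¹ ^ (Lam x) :=
            Real.rpow_le_rpow_of_exponent_le hti (hhi x i)
        _ = ‖ξ‖⁻¹ := by
            rw [htdef, ← Real.rpow_neg (norm_nonneg ξ), ← Real.rpow_mul (norm_nonneg ξ),
              show -(1 / Lam x) * Lam x = -1 by field_simp, Real.rpow_neg_one]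
  · intro hξ1
    have h0 : ξ ≠ 0 := by
      intro h
      rw [h, norm_zero] at hξ1
      linarith
    have hr : 0 < ‖ξ‖ := norm_pos_iff.mpr h0
    apply key (lam x) (ne_of_gt (hlam x)) h0
    intro i
    have hne : lam x ≠ 0 := ne_of_gt (hlam x)
    set t : ℝ := ‖ξ‖ ^ (1 / lam x) with htdef
    have ht1 : 1 ≤ t := Real.one_le_rpow hξ1 (one_div_pos.mpr (hlam x)).le
    have ht : 0 < t := lt_of_lt_of_le one_pos ht1
    have hti0 : 0 < t⁻¹ := inv_pos.mpr ht
    have hti : t⁻¹ ≤ 1 := inv_le_one_of_one_le₀ ht1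
    calc t⁻¹ ^ (hsym x).eigenvalues i ≤ t⁻¹ ^ (lam x) :=
          Real.rpow_le_rpow_of_exponent_ge hti0 hti (hlo x i)
      _ = ‖ξ‖⁻¹ := by
          rw [htdef, ← Real.rpow_neg (norm_nonneg ξ), ← Real.rpow_mul (norm_nonneg ξ),
            show -(1 / lam x) * lam x = -1 by field_simp, Real.rpow_neg_one]
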